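/- Let T > 0, p, q ≥ 0 with p + 2q > 0. Suppose {λ_k}_{k≥1} is an increasing sequence of positive reals satisfying C₁k² ≤ λ_k ≤ C₂k² for all k ≥ 2 (with C₁, C₂ > 0), and suppose there exist M ∈ ℕ* and γ > 0 such that λ_{k+M} − λ_k ≥ γ for all k. Then there exist constants A, B > 0 (depending on p, q, M, γ but not on T) such that Σ_{k=1}^∞ λ_k^{p+2q} e^{−λ_k T} ≤ A/T^{p+2q} + B/T^{p+2q+1} for all 0 < T ≤ 1. -/
import Mathlib

open Real

lemma aux_rpow_exp {s y : ℝ} (hs : 0 < s) (hy : 0 ≤ y) :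
    y ^ s * Real.exp (-y) ≤ s ^ s * Real.exp (-s) := by
  rcases eq_or_lt_of_le hy with h | h
  · rw [← h, Real.zero_rpow hs.ne', zero_mul]
    positivity
  · rw [Real.rpow_def_of_pos h, Real.rpow_def_of_pos hs, ← Real.exp_add, ← Real.exp_add,
      Real.exp_le_exp]
    have hlog : Real.log (y / s) ≤ y / s - 1 := Real.log_le_sub_one_of_pos (by positivity)
    rw [Real.log_div h.ne' hs.ne'] at hlog
    have h2 := mul_le_mul_of_nonneg_right hlog hs.le
    have h3 : y / s * s = y := div_mul_cancel₀ y hs.ne'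
    nlinarith

lemma aux_geom (x : ℝ) (hx : 0 < x) : (1 - Real.exp (-x))⁻¹ ≤ Real.exp x / x := by
  have h1 : x * Real.exp (-x) ≤ 1 - Real.exp (-x) := by
    have hm := mul_le_mul_of_nonneg_right (Real.add_one_le_exp x) (Real.exp_pos (-x)).le
    rw [← Real.exp_add, add_neg_cancel, Real.exp_zero] at hm
    nlinarith
  have h2 : 0 < x * Real.exp (-x) := by positivity
  calc (1 - Real.exp (-x))⁻¹ ≤ (x * Real.exp (-x))⁻¹ := by
        apply inv_anti₀ h2 h1
    _ = Real.exp x / x := by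
        rw [Real.exp_neg, mul_inv, inv_inv, div_eq_mul_inv, mul_comm]

theorem stmt_4 (p q : ℝ) (lam : ℕ → ℝ) (C₁ C₂ γ : ℝ) (M : ℕ)
    (hp : 0 ≤ p) (hq : 0 ≤ q) (hpq : 0 < p + 2 * q)
    (hC₁ : 0 < C₁) (hC₂ : 0 < C₂) (hγ : 0 < γ) (hM : 1 ≤ M)
    (hpos : ∀ k, 1 ≤ k → 0 < lam k)
    (hmono : ∀ k, 1 ≤ k → lam k < lam (k + 1))
    (hquad : ∀ k : ℕ, 2 ≤ k → C₁ * (k : ℝ) ^ 2 ≤ lam k ∧ lam k ≤ C₂ * (k : ℝ) ^ 2)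
    (hgap : ∀ k, 1 ≤ k → lam (k + M) - lam k ≥ γ) :
    ∃ A B : ℝ, 0 < A ∧ 0 < B ∧ ∀ T : ℝ, 0 < T → T ≤ 1 →
      ∑' k : {n : ℕ // 1 ≤ n}, (lam k) ^ (p + 2 * q) * Real.exp (-(lam k) * T)
        ≤ A / T ^ (p + 2 * q) + B / T ^ (p + 2 * q + 1) := by
  set s := p + 2 * q with hsdef
  have hs : 0 < s := hpq
  have hl1 : 0 < lam 1 := hpos 1 le_rfl
  set c := min (C₁ / 2) (lam 1 / 2) with hc
  have hcpos : 0 < c := lt_min (by positivity) (by positivity)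
  have hck : ∀ k : ℕ, 1 ≤ k → c * k ≤ lam k / 2 := by
    intro k hk
    rcases eq_or_lt_of_le hk with h | h
    · rw [← h]
      push_cast
      rw [mul_one]
      exact min_le_right (C₁ / 2) (lam 1 / 2)
    · have hk2 : (2 : ℕ) ≤ k := h
      have hq1 := (hquad k hk2).1
      have hkR : (1 : ℝ) ≤ (k : ℝ) := by exact_mod_cast hk
      have hsq : (k : ℝ) ≤ (k : ℝ) ^ 2 := by nlinarith
      have hc1 : c ≤ C₁ / 2 := min_le_left _ _
      nlinarith
  set D := (2 : ℝ) ^ s * (s ^ s * Real.exp (-s)) with hD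
  have hDpos : 0 < D := by
    have h1 : (0:ℝ) < (2:ℝ) ^ s := Real.rpow_pos_of_pos two_pos s
    have h2 : (0:ℝ) < s ^ s := Real.rpow_pos_of_pos hs s
    positivity
  refine ⟨1, D * Real.exp c / c, one_pos, by positivity, ?_⟩
  intro T hT hT1
  set r := Real.exp (-(c * T)) with hr
  have hr0 : 0 < r := Real.exp_pos _
  have hr1 : r < 1 := by
    rw [hr, Real.exp_lt_one_iff]
    nlinarith
  have hTs : 0 < T ^ s := Real.rpow_pos_of_pos hT s
  have hpoint : ∀ k : {n : ℕ // 1 ≤ n},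
      lam k ^ s * Real.exp (-(lam k) * T) ≤ D / T ^ s * r ^ (k : ℕ) := by
    rintro ⟨k, hk⟩
    simp only
    have hlk : 0 < lam k := hpos k hk
    have h1 : lam k ^ s * Real.exp (-(lam k * T / 2)) ≤ D / T ^ s := by
      have key := aux_rpow_exp hs (y := lam k * (T / 2)) (by positivity)
      rw [Real.mul_rpow hlk.le (by positivity)] at key
      have hT2 : (0:ℝ) < (T / 2) ^ s := Real.rpow_pos_of_pos (by positivity) s
      have heq2 : (T / 2) ^ s = T ^ s / (2:ℝ) ^ s := Real.div_rpow hT.le (by norm_num : (0:ℝ) ≤ 2) s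
      have harg : lam k * (T / 2) = lam k * T / 2 := by ring
      rw [harg] at key
      rw [le_div_iff₀ hTs]
      have : lam k ^ s * Real.exp (-(lam k * T / 2)) * (T / 2) ^ s ≤ s ^ s * Real.exp (-s) := by
        nlinarith [Real.exp_pos (-(lam k * T / 2))]
      have h2s : (0:ℝ) < (2:ℝ) ^ s := Real.rpow_pos_of_pos two_pos s
      rw [heq2] at this
      have := mul_le_mul_of_nonneg_right this h2s.le
      rw [hD]
      calc lam k ^ s * Real.exp (-(lam k * T / 2)) * T ^ s
          = lam k ^ s * Real.exp (-(lam k * T / 2)) * (T ^ s / 2 ^ s) * 2 ^ s := by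
            field_simp
        _ ≤ s ^ s * Real.exp (-s) * 2 ^ s := this
        _ = 2 ^ s * (s ^ s * Real.exp (-s)) := by ring
    have h2 : Real.exp (-(lam k * T / 2)) ≤ r ^ k := by
      rw [hr, ← Real.exp_nat_mul, Real.exp_le_exp]
      have := hck k hk
      have hkR : (0:ℝ) ≤ (k : ℝ) := Nat.cast_nonneg k
      nlinarith
    calc lam k ^ s * Real.exp (-(lam k) * T)
        = (lam k ^ s * Real.exp (-(lam k * T / 2))) * Real.exp (-(lam k * T / 2)) := by
          rw [mul_assoc, ← Real.exp_add]; ring_nf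
      _ ≤ D / T ^ s * r ^ k := by
          apply mul_le_mul h1 h2 (Real.exp_pos _).le (by positivity)
  have hgsum : Summable (fun k : ℕ => r ^ k) := summable_geometric_of_lt_one hr0.le hr1
  have hgsub : Summable (fun k : {n : ℕ // 1 ≤ n} => r ^ (k : ℕ)) :=
    hgsum.comp_injective Subtype.val_injective
  have hgsub2 : Summable (fun k : {n : ℕ // 1 ≤ n} => D / T ^ s * r ^ (k : ℕ)) :=
    hgsub.mul_left _
  have hfsum : Summable (fun k : {n : ℕ // 1 ≤ n} => lam k ^ s * Real.exp (-(lam k) * T)) := by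
    apply Summable.of_nonneg_of_le _ hpoint hgsub2
    rintro ⟨k, hk⟩
    have := hpos k hk
    positivity
  have hsub_le : ∑' k : {n : ℕ // 1 ≤ n}, r ^ (k : ℕ) ≤ ∑' k : ℕ, r ^ k := by
    apply Summable.tsum_le_tsum_of_inj (Subtype.val) Subtype.val_injective
      (fun c _ => by positivity) (fun b => le_rfl) hgsub hgsum
  have hgeom : ∑' k : ℕ, r ^ k = (1 - r)⁻¹ := tsum_geometric_of_lt_one hr0.le hr1
  have hbound : ∑' k : {n : ℕ // 1 ≤ n}, lam k ^ s * Real.exp (-(lam k) * T)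
      ≤ D / T ^ s * (Real.exp c / (c * T)) := by
    calc ∑' k : {n : ℕ // 1 ≤ n}, lam k ^ s * Real.exp (-(lam k) * T)
        ≤ ∑' k : {n : ℕ // 1 ≤ n}, D / T ^ s * r ^ (k : ℕ) :=
          Summable.tsum_le_tsum hpoint hfsum hgsub2
      _ = D / T ^ s * ∑' k : {n : ℕ // 1 ≤ n}, r ^ (k : ℕ) := tsum_mul_left
      _ ≤ D / T ^ s * (1 - r)⁻¹ := by
          apply mul_le_mul_of_nonneg_left _ (by positivity)
          rw [← hgeom]; exact hsub_le
      _ ≤ D / T ^ s * (Real.exp (c * T) / (c * T)) := by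
          apply mul_le_mul_of_nonneg_left _ (by positivity)
          exact aux_geom (c * T) (by positivity)
      _ ≤ D / T ^ s * (Real.exp c / (c * T)) := by
          apply mul_le_mul_of_nonneg_left _ (by positivity)
          apply div_le_div_of_nonneg_right _ (by positivity)
          · exact Real.exp_le_exp.mpr (by nlinarith)
  have hfinal : D / T ^ s * (Real.exp c / (c * T)) ≤ D * Real.exp c / c / T ^ (s + 1) := by
    have hs1 : T ^ (s + 1) = T ^ s * T := by
      rw [Real.rpow_add hT s 1, Real.rpow_one]
    rw [hs1]
    apply le_of_eq
    rw [div_div, div_mul_div_comm]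
    congr 1
    ring
  have hA : (0:ℝ) ≤ 1 / T ^ s := by positivity
  calc ∑' k : {n : ℕ // 1 ≤ n}, lam k ^ s * Real.exp (-(lam k) * T)
      ≤ D / T ^ s * (Real.exp c / (c * T)) := hbound
    _ ≤ D * Real.exp c / c / T ^ (s + 1) := hfinal
    _ ≤ 1 / T ^ s + D * Real.exp c / c / T ^ (s + 1) := by linarith
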